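/- Let S ≥ 1, D > 0, n ≥ 1. Let p̂ ∈ Δ^S be the average of n i.i.d. multinoulli trials with parameter p ∈ Δ^S. Define Δ_i := √( 3·p̂_i·log(4S)/n ) + 3·log(4S)/n, p⁻ := p̂ − Δ (coordinatewise), and let z be a random vector picked uniformly at random from the standard basis vectors {e_1, …, e_S}, independently of the trials; set p̃ := p⁻ + (1 − Σ_{i=1}^S p⁻_i)·z. Then for any fixed h ∈ [0,D]^S, Pr( p̃ᵀh ≤ pᵀh ) ≥ 1/(2S). -/

import Mathlib

open MeasureTheory ProbabilityTheory Finset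

noncomputable section

/-- Law of a `Dirichlet(α)` random vector: the law of `(X i / ∑ j, X j) i` where the `X i`
are independent with `X i ~ Gamma (α i) 1`. -/
def dirichletLaw {S : ℕ} (α : Fin S → ℝ) : Measure (Fin S → ℝ) :=
  (Measure.pi fun i => gammaMeasure (α i) 1).map (fun x i => x i / ∑ j, x j)

/-- The categorical (multinoulli) measure on `Fin S` with parameter `p`. -/
def catMeasure {S : ℕ} (p : Fin S → ℝ) : Measure (Fin S) :=
  ∑ i : Fin S, ENNReal.ofReal (p i) • Measure.dirac i

/-- Joint law of `n` i.i.d. multinoulli trials with parameter `p`. -/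
def trialsLaw {S : ℕ} (p : Fin S → ℝ) (n : ℕ) : Measure (Fin n → Fin S) :=
  Measure.pi fun _ : Fin n => catMeasure p

/-- The empirical distribution (the average `p̂` of the `n` multinoulli trials `x`). -/
def empDist {S n : ℕ} (x : Fin n → Fin S) (i : Fin S) : ℝ :=
  ((Finset.univ.filter fun j => x j = i).card : ℝ) / (n : ℝ)

/-- The downward-shifted empirical estimate `p⁻ i = p̂ i - Δ i` used in simple
optimistic sampling. -/
def pminus {S n : ℕ} (x : Fin n → Fin S) (i : Fin S) : ℝ :=
  empDist x i - (Real.sqrt (3 * empDist x i * Real.log (4 * S) / n) + 3 * Real.log (4 * S) / n)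

/-- The simple optimistic sample: `p̃ = p⁻ + (1 - ∑ i, p⁻ i) • e_z` where `z` is the extra
uniformly random coordinate. -/
def ptilde {S n : ℕ} (x : Fin n → Fin S) (z : Fin S) (i : Fin S) : ℝ :=
  pminus x i + (1 - ∑ j, pminus x j) * (if i = z then 1 else 0)

/-- Joint law of the `n` multinoulli trials together with an independent coordinate
`z` drawn uniformly from `{1, …, S}` (i.e., uniformly among the basis vectors). -/
def simpleLaw {S : ℕ} (p : Fin S → ℝ) (n : ℕ) : Measure ((Fin n → Fin S) × Fin S) :=
  (trialsLaw p n).prod (((S : ENNReal))⁻¹ • Measure.count)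

/-! ### Auxiliary lemmas -/

/-- Lower bound on the logarithm: `2u/(2+u) ≤ log (1+u)` for `u ≥ 0`. -/
lemma aux_log_lb {u : ℝ} (hu : 0 ≤ u) : 2*u/(2+u) ≤ Real.log (1+u) := by
  set f : ℝ → ℝ := fun x => Real.log (1+x) - 2*x/(2+x) with hf
  have hd : ∀ x ∈ interior (Set.Ici (0:ℝ)), HasDerivAt f (1/(1+x) - 4/(2+x)^2) x := by
    intro x hx
    rw [interior_Ici] at hx
    have hx0 : (0:ℝ) < x := hx
    have h1 : HasDerivAt (fun x : ℝ => Real.log (1+x)) (1/(1+x)) x := by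
      have : HasDerivAt (fun x : ℝ => 1+x) 1 x := (hasDerivAt_id x).const_add 1
      simpa using this.log (by positivity)
    have h2 : HasDerivAt (fun x : ℝ => 2*x/(2+x)) (4/(2+x)^2) x := by
      have ha : HasDerivAt (fun x : ℝ => 2*x) 2 x := by
        simpa using (hasDerivAt_id x).const_mul (2:ℝ)
      have hb : HasDerivAt (fun x : ℝ => 2+x) 1 x := (hasDerivAt_id x).const_add 2
      have := ha.div hb (by positivity)
      refine this.congr_deriv ?_
      ring
    exact h1.sub h2
  have hmono : MonotoneOn f (Set.Ici 0) := by
    apply monotoneOn_of_deriv_nonneg (convex_Ici 0)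
    · apply ContinuousOn.sub
      · apply ContinuousOn.log (by fun_prop)
        intro x hx; simp only [Set.mem_Ici] at hx; positivity
      · apply ContinuousOn.div (by fun_prop) (by fun_prop)
        intro x hx; simp only [Set.mem_Ici] at hx; positivity
    · intro x hx
      exact (hd x hx).differentiableAt.differentiableWithinAt
    · intro x hx
      rw [(hd x hx).deriv]
      rw [interior_Ici] at hx
      have hx0 : (0:ℝ) < x := hx
      rw [sub_nonneg, div_le_div_iff₀ (by positivity) (by positivity)]
      nlinarith
  have h0 : f 0 = 0 := by simp [hf]
  have := hmono (Set.self_mem_Ici) (Set.mem_Ici.2 hu) hu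
  rw [h0] at this
  have : 0 ≤ Real.log (1+u) - 2*u/(2+u) := this
  linarith

/-- The Bennett-type inequality `u²/(2+u) ≤ (1+u) log(1+u) - u` for `u ≥ 0`. -/
lemma aux_key_ineq {u : ℝ} (hu : 0 ≤ u) : u^2/(2+u) ≤ (1+u)*Real.log (1+u) - u := by
  have h1 := aux_log_lb hu
  have h2 : (0:ℝ) < 2 + u := by linarith
  have h3 : (1+u) * (2*u/(2+u)) ≤ (1+u) * Real.log (1+u) :=
    mul_le_mul_of_nonneg_left h1 (by linarith)
  have he : (1+u) * (2*u/(2+u)) - u = u^2/(2+u) := by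
    field_simp
    ring
  linarith

lemma catMeasure_apply {S : ℕ} (p : Fin S → ℝ) (s : Fin S) :
    catMeasure p {s} = ENNReal.ofReal (p s) := by
  rw [catMeasure, Measure.coe_finset_sum]
  simp only [Finset.sum_apply, Measure.smul_apply, smul_eq_mul]
  rw [Finset.sum_eq_single s]
  · simp [Measure.dirac_apply]
  · intro i _ hi
    rw [Measure.dirac_apply' _ (measurableSet_singleton s)]
    simp [hi]
  · simp

lemma catMeasure_univ {S : ℕ} (p : Fin S → ℝ) (hp1 : ∑ i, p i = 1) (hp0 : ∀ i, 0 ≤ p i) :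
    catMeasure p Set.univ = 1 := by
  rw [catMeasure, Measure.coe_finset_sum]
  simp only [Finset.sum_apply, Measure.smul_apply, smul_eq_mul, Measure.dirac_apply_of_mem
    (Set.mem_univ _), mul_one]
  rw [← ENNReal.ofReal_sum_of_nonneg (fun i _ => hp0 i), hp1, ENNReal.ofReal_one]

lemma catMeasure_prob {S : ℕ} (p : Fin S → ℝ) (hp1 : ∑ i, p i = 1) (hp0 : ∀ i, 0 ≤ p i) :
    IsProbabilityMeasure (catMeasure p) := ⟨catMeasure_univ p hp1 hp0⟩

/-- Chernoff bound for the number of trials landing on `i`. -/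
lemma aux_chernoff {S n : ℕ} (p : Fin S → ℝ) (hp1 : ∑ i, p i = 1) (hp0 : ∀ i, 0 ≤ p i)
    (i : Fin S) (l a : ℝ) (hl : 0 ≤ l) :
    trialsLaw p n {x | a ≤ ((Finset.univ.filter fun j => x j = i).card : ℝ)} ≤
      ENNReal.ofReal (Real.exp (-(l * a)) * (p i * Real.exp l + (1 - p i)) ^ n) := by
  haveI := catMeasure_prob p hp1 hp0
  set cnt : (Fin n → Fin S) → ℝ := fun x => ((Finset.univ.filter fun j => x j = i).card : ℝ)
    with hcnt
  set F : (Fin n → Fin S) → ENNReal := fun x => ENNReal.ofReal (Real.exp (l * cnt x)) with hF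
  set m : ℝ := p i * Real.exp l + (1 - p i) with hm
  have hm0 : 0 ≤ m := by
    have := Real.one_le_exp hl
    nlinarith [hp0 i]
  have hcnt_sum : ∀ x : Fin n → Fin S,
      cnt x = ∑ j, (if x j = i then (1:ℝ) else 0) := by
    intro x
    rw [hcnt]
    simp only [Finset.card_filter]
    push_cast
    rfl
  have hFprod : ∀ x, F x * trialsLaw p n {x}
      = ∏ j, ENNReal.ofReal (Real.exp (l * (if x j = i then (1:ℝ) else 0)) * p (x j)) := by
    intro x
    have hpi : trialsLaw p n {x} = ∏ j, ENNReal.ofReal (p (x j)) := by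
      rw [trialsLaw, ← Set.univ_pi_singleton x, Measure.pi_pi]
      simp [catMeasure_apply]
    rw [hpi, hF]
    simp only
    rw [hcnt_sum x, Finset.mul_sum, Real.exp_sum,
      ENNReal.ofReal_prod_of_nonneg (fun j _ => (Real.exp_pos _).le), ← Finset.prod_mul_distrib]
    exact Finset.prod_congr rfl fun j _ => (ENNReal.ofReal_mul (Real.exp_pos _).le).symm
  have hint : ∫⁻ x, F x ∂(trialsLaw p n) = (ENNReal.ofReal m) ^ n := by
    rw [lintegral_fintype]
    calc ∑ x : Fin n → Fin S, F x * trialsLaw p n {x}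
        = ∑ x : Fin n → Fin S, ∏ j,
            ENNReal.ofReal (Real.exp (l * (if x j = i then (1:ℝ) else 0)) * p (x j)) :=
          Finset.sum_congr rfl fun x _ => hFprod x
      _ = (∑ s : Fin S, ENNReal.ofReal (Real.exp (l * (if s = i then (1:ℝ) else 0)) * p s)) ^ n := by
          rw [← Fintype.piFinset_univ, ← Finset.prod_univ_sum
            (fun _ : Fin n => (univ : Finset (Fin S)))
            (fun _ s => ENNReal.ofReal (Real.exp (l * (if s = i then (1:ℝ) else 0)) * p s))]
          simp
      _ = (ENNReal.ofReal m) ^ n := by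
          congr 1
          rw [← ENNReal.ofReal_sum_of_nonneg
            (fun s _ => mul_nonneg (Real.exp_pos _).le (hp0 _))]
          congr 1
          have : ∀ s : Fin S, Real.exp (l * (if s = i then (1:ℝ) else 0)) * p s
              = p s + (if s = i then (Real.exp l - 1) * p s else 0) := by
            intro s
            by_cases hsi : s = i <;> simp [hsi] <;> ring
          rw [Finset.sum_congr rfl fun s _ => this s, Finset.sum_add_distrib,
            Finset.sum_ite_eq' Finset.univ i, hp1, hm]
          simp
          ring
  have hsub : {x : Fin n → Fin S | a ≤ cnt x}
      ⊆ {x | ENNReal.ofReal (Real.exp (l * a)) ≤ F x} := by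
    intro x hx
    simp only [Set.mem_setOf_eq] at hx ⊢
    exact ENNReal.ofReal_le_ofReal (Real.exp_le_exp.2 (mul_le_mul_of_nonneg_left hx hl))
  calc trialsLaw p n {x | a ≤ cnt x}
      ≤ trialsLaw p n {x | ENNReal.ofReal (Real.exp (l * a)) ≤ F x} := measure_mono hsub
    _ ≤ (∫⁻ x, F x ∂(trialsLaw p n)) / ENNReal.ofReal (Real.exp (l * a)) :=
        meas_ge_le_lintegral_div (measurable_of_countable F).aemeasurable
          (by simp [Real.exp_pos]) (by simp)
    _ = ENNReal.ofReal (Real.exp (-(l * a)) * m ^ n) := by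
        rw [hint, ← ENNReal.ofReal_pow hm0, ← ENNReal.ofReal_div_of_pos (Real.exp_pos _)]
        rw [div_eq_mul_inv, ← Real.exp_neg, mul_comm]

set_option maxHeartbeats 1000000 in
/-- Per-coordinate failure probability bound: `P(p i < p⁻ i) ≤ 1/(4S)`. -/
lemma aux_coord {S n : ℕ} (hS : 1 ≤ S) (hn : 1 ≤ n) (p : Fin S → ℝ)
    (hp1 : ∑ i, p i = 1) (hp0 : ∀ i, 0 ≤ p i) (i : Fin S) :
    trialsLaw p n {x | p i < pminus x i} ≤ ENNReal.ofReal (1 / (4 * S)) := by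
  have hn' : (0:ℝ) < n := by exact_mod_cast hn
  have hS' : (0:ℝ) < S := by exact_mod_cast hS
  set L : ℝ := Real.log (4 * S) with hLdef
  have hL0 : 0 < L := by
    apply Real.log_pos
    have h1 : (1:ℝ) ≤ S := by exact_mod_cast hS
    nlinarith
  set r : ℝ := p i with hrdef
  have hr0 : 0 ≤ r := hp0 i
  set s : ℝ := Real.sqrt (3 * r * L / n) with hsdef
  have hs0 : 0 ≤ s := Real.sqrt_nonneg _
  set t : ℝ := s + 3 * L / n with htdef
  have ht0 : 0 < t := by positivity
  set a : ℝ := n * (r + t) with hadef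
  clear_value L r s t a
  have hexpL : Real.exp (-L) = 1 / (4 * S) := by
    rw [Real.exp_neg, hLdef, Real.exp_log (by positivity), one_div]
  -- Step 1 : inclusion of events
  have hsub : {x : Fin n → Fin S | r < pminus x i}
      ⊆ {x | a ≤ ((Finset.univ.filter fun j => x j = i).card : ℝ)} := by
    intro x hx
    simp only [Set.mem_setOf_eq, pminus, ← hLdef] at hx ⊢
    set q : ℝ := empDist x i with hqdef
    have hq0 : 0 ≤ q := by
      rw [hqdef, empDist]
      positivity
    have hsq : 0 ≤ Real.sqrt (3 * q * L / n) := Real.sqrt_nonneg _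
    have hLn : 0 < 3 * L / n := by positivity
    have hrq : r ≤ q := by nlinarith [hx, hsq, hLn]
    have hmono : s ≤ Real.sqrt (3 * q * L / n) := by
      rw [hsdef]
      apply Real.sqrt_le_sqrt
      have e1 : 3 * r * L / n = r * (3 * L / n) := by ring
      have e2 : 3 * q * L / n = q * (3 * L / n) := by ring
      rw [e1, e2]
      exact mul_le_mul_of_nonneg_right hrq hLn.le
    have hrtq : r + t ≤ q := by
      rw [htdef]
      nlinarith [hx, hmono]
    have hcnteq : (n:ℝ) * q = ((Finset.univ.filter fun j => x j = i).card : ℝ) := by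
      rw [hqdef, empDist]
      field_simp
    calc a = n * (r + t) := hadef
      _ ≤ n * q := mul_le_mul_of_nonneg_left hrtq hn'.le
      _ = _ := hcnteq
  rcases eq_or_lt_of_le hr0 with hr | hr
  · -- the case `p i = 0` : use `l = 1`
    have hs_eq : s = 0 := by
      rw [hsdef, ← hr]
      simp
    have ha_eq : a = 3 * L := by
      rw [hadef, htdef, hs_eq, ← hr]
      field_simp
      ring
    calc trialsLaw p n {x | r < pminus x i}
        ≤ trialsLaw p n {x | a ≤ ((Finset.univ.filter fun j => x j = i).card : ℝ)} :=
          measure_mono hsub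
      _ ≤ ENNReal.ofReal (Real.exp (-(1 * a)) * (p i * Real.exp 1 + (1 - p i)) ^ n) :=
          aux_chernoff p hp1 hp0 i 1 a zero_le_one
      _ ≤ ENNReal.ofReal (1 / (4 * S)) := by
          apply ENNReal.ofReal_le_ofReal
          rw [← hrdef, ← hr]
          rw [← hexpL]
          simp only [zero_mul, zero_add, sub_zero, one_pow, mul_one, one_mul]
          apply Real.exp_le_exp.2
          rw [ha_eq]
          linarith
  · -- the case `p i > 0`
    set u : ℝ := t / r with hudef
    have hu0 : 0 < u := div_pos ht0 hr
    set l : ℝ := Real.log (1 + u) with hldef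
    clear_value u l
    have hl0 : 0 ≤ l := by
      rw [hldef]
      exact Real.log_nonneg (by linarith)
    have hel : Real.exp l = 1 + u := by
      rw [hldef]
      exact Real.exp_log (by linarith)
    have htru : r * u = t := by
      rw [hudef]
      field_simp
    have hm_eq : r * Real.exp l + (1 - r) = 1 + t := by
      rw [hel, mul_add, mul_one, htru]
      ring
    have hns : (n:ℝ) * s ^ 2 = 3 * r * L := by
      rw [hsdef, Real.sq_sqrt (by positivity)]
      field_simp
    have hnt : (n:ℝ) * t = n * s + 3 * L := by
      rw [htdef]
      field_simp
    have hA : (0:ℝ) ≤ r * (L * n) := by positivity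
    have hB : (0:ℝ) ≤ L * ((n:ℝ) * s) := by positivity
    have hC : (0:ℝ) ≤ L ^ 2 := sq_nonneg L
    have hq2 : L * (2 * r + t) * n ≤ ((n:ℝ) * t) ^ 2 := by
      have e1 : ((n:ℝ) * t) ^ 2 = (n:ℝ) * ((n:ℝ) * s ^ 2) + 6 * (L * ((n:ℝ) * s)) + 9 * L ^ 2 := by
        rw [hnt]; ring
      have e2 : L * (2 * r + t) * n = 2 * (r * (L * n)) + L * ((n:ℝ) * t) := by ring
      rw [e1, hns, e2, hnt]
      nlinarith [hA, hB, hC]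
    have hq3 : L * (2 * r + t) ≤ n * t ^ 2 := by
      have h2 : L * (2 * r + t) * n ≤ (n * t ^ 2) * n := by
        calc L * (2 * r + t) * n ≤ ((n:ℝ) * t) ^ 2 := hq2
          _ = (n * t ^ 2) * n := by ring
      exact le_of_mul_le_mul_right h2 hn'
    have heq : n * t ^ 2 / (2 * r + t) = n * r * (u ^ 2 / (2 + u)) := by
      rw [← htru]
      have h2u : (0:ℝ) < 2 + u := by linarith
      field_simp
    have hkey2 : L ≤ n * r * (u ^ 2 / (2 + u)) := by
      rw [← heq, le_div_iff₀ (by positivity)]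
      exact hq3
    have hbenn : u ^ 2 / (2 + u) ≤ (1 + u) * Real.log (1 + u) - u := aux_key_ineq hu0.le
    have hAB : n * r * (u ^ 2 / (2 + u)) ≤ n * r * ((1 + u) * l - u) := by
      rw [hldef]
      exact mul_le_mul_of_nonneg_left hbenn (by positivity)
    have hlog1t : Real.log (1 + t) ≤ t := by
      have := Real.log_le_sub_one_of_pos (show (0:ℝ) < 1 + t by linarith)
      linarith
    have h5 : (n:ℝ) * Real.log (1 + t) ≤ n * r * u := by
      calc (n:ℝ) * Real.log (1 + t) ≤ n * t := mul_le_mul_of_nonneg_left hlog1t hn'.le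
        _ = n * r * u := by rw [← htru]; ring
    have hexpand : l * a = n * r * ((1 + u) * l) := by
      rw [hadef, ← htru]
      ring
    have hfinal : -(l * a) + n * Real.log (1 + t) ≤ -L := by
      nlinarith [hAB, hkey2, h5, hexpand]
    calc trialsLaw p n {x | r < pminus x i}
        ≤ trialsLaw p n {x | a ≤ ((Finset.univ.filter fun j => x j = i).card : ℝ)} :=
          measure_mono hsub
      _ ≤ ENNReal.ofReal (Real.exp (-(l * a)) * (p i * Real.exp l + (1 - p i)) ^ n) :=
          aux_chernoff p hp1 hp0 i l a hl0
      _ ≤ ENNReal.ofReal (1 / (4 * S)) := by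
          apply ENNReal.ofReal_le_ofReal
          rw [← hrdef, hm_eq, ← hexpL]
          have hpow : (1 + t) ^ n = Real.exp ((n:ℝ) * Real.log (1 + t)) := by
            rw [Real.exp_nat_mul, Real.exp_log (by linarith)]
          rw [hpow, ← Real.exp_add]
          exact Real.exp_le_exp.2 hfinal

/-- The deterministic pessimism step: if `p⁻ ≤ p` coordinatewise and `z` attains the
minimum of `h`, then `p̃ᵀh ≤ pᵀh`. -/
lemma aux_det {S n : ℕ} (p h : Fin S → ℝ) (hp1 : ∑ i, p i = 1) (istar : Fin S)
    (hmin : ∀ i, h istar ≤ h i) (x : Fin n → Fin S) (hx : ∀ i, pminus x i ≤ p i) :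
    ∑ i, ptilde x istar i * h i ≤ ∑ i, p i * h i := by
  have e2 : ∑ i, ptilde x istar i * h i
      = (∑ i, pminus x i * h i) + (1 - ∑ j, pminus x j) * h istar := by
    simp only [ptilde, add_mul, Finset.sum_add_distrib]
    congr 1
    have e : ∀ i : Fin S, (1 - ∑ j, pminus x j) * (if i = istar then (1:ℝ) else 0) * h i
        = if i = istar then (1 - ∑ j, pminus x j) * h i else 0 := by
      intro i
      by_cases hi : i = istar <;> simp [hi]
    rw [Finset.sum_congr rfl fun i _ => e i, Finset.sum_ite_eq' Finset.univ istar]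
    simp
  have hkey : 0 ≤ ∑ i, (p i - pminus x i) * (h i - h istar) :=
    Finset.sum_nonneg fun i _ => mul_nonneg (by linarith [hx i]) (by linarith [hmin i])
  have e3 : ∑ i, (p i - pminus x i) * (h i - h istar)
      = (∑ i, p i * h i) - (∑ i, pminus x i * h i)
        - ((∑ i, p i) * h istar) + ((∑ j, pminus x j) * h istar) := by
    simp only [sub_mul, mul_sub]
    rw [Finset.sum_sub_distrib, Finset.sum_sub_distrib, Finset.sum_sub_distrib,
      ← Finset.sum_mul, ← Finset.sum_mul]
    ring
  rw [hp1] at e3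
  rw [e2]
  linarith [hkey, e3.symm.le, e3.le]

/-- Pessimism of the simple optimistic sample (Lemma `biasSmallN` of the paper). -/
theorem stmt_13 (S n : ℕ) (hS : 1 ≤ S) (hn : 1 ≤ n) (D : ℝ) (hD : 0 < D)
    (p : Fin S → ℝ) (hp : p ∈ stdSimplex ℝ (Fin S))
    (h : Fin S → ℝ) (hh : ∀ i, h i ∈ Set.Icc (0 : ℝ) D) :
    ENNReal.ofReal (1 / (2 * S)) ≤
      simpleLaw p n
        {y | ∑ i, ptilde y.1 y.2 i * h i ≤ ∑ i, p i * h i} := by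
  obtain ⟨hp0, hp1⟩ := hp
  have hS' : (0:ℝ) < S := by exact_mod_cast hS
  haveI := catMeasure_prob p hp1 hp0
  haveI : IsProbabilityMeasure (trialsLaw p n) := by
    rw [trialsLaw]; infer_instance
  haveI : Nonempty (Fin S) := ⟨⟨0, hS⟩⟩
  obtain ⟨istar, -, hmin⟩ := Finset.exists_min_image Finset.univ h Finset.univ_nonempty
  have hmin' : ∀ i, h istar ≤ h i := fun i => hmin i (Finset.mem_univ i)
  set E : Set (Fin n → Fin S) := {x | ∀ i, pminus x i ≤ p i} with hE
  -- the measure of `E` is at least `1/2`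
  have hEc : trialsLaw p n Eᶜ ≤ ENNReal.ofReal (1 / 4) := by
    have hcompl : Eᶜ = ⋃ i, {x : Fin n → Fin S | p i < pminus x i} := by
      ext x
      simp [hE, not_forall, not_le]
    rw [hcompl]
    calc trialsLaw p n (⋃ i, {x : Fin n → Fin S | p i < pminus x i})
        ≤ ∑ i, trialsLaw p n {x : Fin n → Fin S | p i < pminus x i} :=
          measure_iUnion_fintype_le _ _
      _ ≤ ∑ _i : Fin S, ENNReal.ofReal (1 / (4 * S)) :=
          Finset.sum_le_sum fun i _ => aux_coord hS hn p hp1 hp0 i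
      _ = ENNReal.ofReal (1 / 4) := by
          rw [Finset.sum_const, Finset.card_univ, Fintype.card_fin, nsmul_eq_mul,
            ← ENNReal.ofReal_natCast S, ← ENNReal.ofReal_mul hS'.le]
          congr 1
          field_simp
  have hEbound : ENNReal.ofReal (1 / 2) ≤ trialsLaw p n E := by
    have hEm : MeasurableSet E := E.to_countable.measurableSet
    have hsum := prob_add_prob_compl (μ := trialsLaw p n) hEm
    have hEeq : trialsLaw p n E = 1 - trialsLaw p n Eᶜ :=
      ENNReal.eq_sub_of_add_eq (measure_ne_top _ _) hsum
    rw [hEeq]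
    apply ENNReal.le_sub_of_add_le_left (measure_ne_top _ _)
    calc trialsLaw p n Eᶜ + ENNReal.ofReal (1 / 2)
        ≤ ENNReal.ofReal (1 / 4) + ENNReal.ofReal (1 / 2) := add_le_add_left hEc _
      _ = ENNReal.ofReal (3 / 4) := by
          rw [← ENNReal.ofReal_add (by norm_num) (by norm_num)]
          norm_num
      _ ≤ 1 := by
          rw [← ENNReal.ofReal_one]
          exact ENNReal.ofReal_le_ofReal (by norm_num)
  -- inclusion of events
  have hsub : E ×ˢ ({istar} : Set (Fin S))
      ⊆ {y : (Fin n → Fin S) × Fin S | ∑ i, ptilde y.1 y.2 i * h i ≤ ∑ i, p i * h i} := by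
    rintro ⟨x, z⟩ ⟨hx, hz⟩
    simp only [Set.mem_singleton_iff] at hz
    simp only [Set.mem_setOf_eq]
    rw [hz]
    exact aux_det p h hp1 istar hmin' x hx
  -- put everything together
  calc ENNReal.ofReal (1 / (2 * S))
      = ENNReal.ofReal (1 / 2) * ((S : ENNReal))⁻¹ := by
        rw [← ENNReal.ofReal_natCast S, ← ENNReal.ofReal_inv_of_pos hS',
          ← ENNReal.ofReal_mul (by norm_num)]
        congr 1
        field_simp
    _ ≤ trialsLaw p n E * (((S : ENNReal))⁻¹ • Measure.count) ({istar} : Set (Fin S)) := by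
        have hcount : (((S : ENNReal))⁻¹ • Measure.count) ({istar} : Set (Fin S))
            = ((S : ENNReal))⁻¹ := by
          simp [Measure.count_singleton]
        rw [hcount]
        exact mul_le_mul_left hEbound _
    _ = simpleLaw p n (E ×ˢ ({istar} : Set (Fin S))) := (Measure.prod_prod _ _).symm
    _ ≤ simpleLaw p n {y | ∑ i, ptilde y.1 y.2 i * h i ≤ ∑ i, p i * h i} :=
        measure_mono hsub
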